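/- Assume the setup: κ is a singular cardinal with cf(κ) = ρ, 2^ρ ≤ κ, and ρ < μ_0, where ⟨μ_i : i < ρ⟩ is an increasing sequence cofinal in κ, each μ_i carries a μ_i-complete uniform ultrafilter U_i with an almost-decreasing generating sequence ⟨A^i_η : η < θ_i⟩ of regular length θ_i with A^i_η ⊆ [μ_i^*, μ_i) where μ_i^* = sup_{i'<i} μ_{i'}; ⟨f_α : α < σ⟩ is a scale in ∏_{i<ρ} μ_i with σ regular and κ < σ; ⟨g_β : β < τ⟩ is a scale in ∏_{i<ρ} θ_i with τ regular and σ ≤ τ; E is a uniform ultrafilter on ρ; for X ∈ E, α < σ, β < τ set Y_{X,α,β} = ⋃_{i∈X} (A^i_{g_β(i)} \ f_α(i)); and assume the sets Y_{X,α,β} generate an ultrafilter U on κ (equivalently, Y ∈ U if and only if Y_{X,α,β} ⊆ Y for some X, α, β). Then the character of U is exactly τ: the family {Y_{X,α,β}} is a base for U of cardinality τ, and no base for U has cardinality less than τ. -/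

import Mathlib

universe u

open Cardinal Set

/-- `A ⊆* B` below the cardinal `κ`: the difference `A \ B` is bounded below `κ`
(where `κ` is identified with its set of ordinals `Set.Iio κ.ord`). -/
def AlmostSub (κ : Cardinal.{u}) (A B : Set Ordinal.{u}) : Prop :=
  ∃ β, β < κ.ord ∧ A \ B ⊆ Set.Iio β

/-- An ultrafilter on the cardinal `κ`, identified with its set of ordinals `Set.Iio κ.ord`. -/
structure UltrafilterOn (κ : Cardinal.{u}) : Type (u + 1) where
  sets : Set (Set Ordinal.{u})
  sets_subset : ∀ A ∈ sets, A ⊆ Set.Iio κ.ord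
  univ_mem : Set.Iio κ.ord ∈ sets
  superset_mem : ∀ A ∈ sets, ∀ B, B ⊆ Set.Iio κ.ord → A ⊆ B → B ∈ sets
  inter_mem : ∀ A ∈ sets, ∀ B ∈ sets, A ∩ B ∈ sets
  empty_not_mem : ∅ ∉ sets
  mem_or_compl_mem : ∀ A, A ⊆ Set.Iio κ.ord → A ∈ sets ∨ Set.Iio κ.ord \ A ∈ sets

namespace UltrafilterOn

variable {κ : Cardinal.{u}}

/-- A uniform ultrafilter: every member has cardinality `κ`. -/
def IsUniform (U : UltrafilterOn κ) : Prop :=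
  ∀ A ∈ U.sets, #A = Cardinal.lift.{u + 1, u} κ

/-- `κ`-completeness: `U` is closed under intersections of fewer than `κ` many of its members. -/
def IsComplete (U : UltrafilterOn κ) : Prop :=
  ∀ S : Set (Set Ordinal.{u}), S.Nonempty → S ⊆ U.sets →
    #S < Cardinal.lift.{u + 1, u} κ → ⋂₀ S ∈ U.sets

/-- Nonprincipal: no singleton is a member. -/
def IsNonprincipal (U : UltrafilterOn κ) : Prop :=
  ∀ β : Ordinal.{u}, {β} ∉ U.sets

/-- A base for `U`: a subfamily `B ⊆ U` such that every member of `U` almost contains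
a member of `B`. -/
def IsBase (U : UltrafilterOn κ) (B : Set (Set Ordinal.{u})) : Prop :=
  B ⊆ U.sets ∧ ∀ X ∈ U.sets, ∃ Y ∈ B, AlmostSub κ Y X

/-- The character of `U`: the least cardinality of a base for `U`. -/
noncomputable def char (U : UltrafilterOn κ) : Cardinal.{u + 1} :=
  sInf {c | ∃ B, U.IsBase B ∧ #B = c}

/-- `⟨A i : i < θord⟩` is an almost-decreasing generating sequence for `U`:
its entries are members of `U`, it is `⊆*`-decreasing, and its range is a base for `U`. -/
def IsADGenSeq (U : UltrafilterOn κ) (θord : Ordinal.{u})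
    (A : Ordinal.{u} → Set Ordinal.{u}) : Prop :=
  (∀ i, i < θord → A i ∈ U.sets) ∧
  (∀ i j, i ≤ j → j < θord → AlmostSub κ (A j) (A i)) ∧
  U.IsBase (A '' Set.Iio θord)

/-- A normal measure on `κ`: a `κ`-complete nonprincipal ultrafilter such that every
function regressive on a member of `U` is constant on a member of `U`. -/
def IsNormalMeasure (U : UltrafilterOn κ) : Prop :=
  U.IsComplete ∧ U.IsNonprincipal ∧
  ∀ f : Ordinal.{u} → Ordinal.{u},
    (∃ X ∈ U.sets, ∀ α ∈ X, f α < α) → ∃ Y ∈ U.sets, ∃ c, ∀ α ∈ Y, f α = c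

end UltrafilterOn

/-- `κ` is a measurable cardinal: it is uncountable and carries a `κ`-complete
nonprincipal ultrafilter. -/
def IsMeasurableCard (κ : Cardinal.{u}) : Prop :=
  ℵ₀ < κ ∧ ∃ U : UltrafilterOn κ, U.IsComplete ∧ U.IsNonprincipal

/-- `f <* g`: eventual (pointwise) domination below `ρord`. -/
def EvDomLt (ρord : Ordinal.{u}) (f g : Ordinal.{u} → Ordinal.{u}) : Prop :=
  ∃ i₀, i₀ < ρord ∧ ∀ i, i₀ ≤ i → i < ρord → f i < g i

/-- Membership in the product `∏_{i < ρord} lam i` (of cardinals `lam i`). -/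
def InProd (ρord : Ordinal.{u}) (lam : Ordinal.{u} → Cardinal.{u})
    (f : Ordinal.{u} → Ordinal.{u}) : Prop :=
  ∀ i, i < ρord → f i < (lam i).ord

/-- `⟨g η : η < ν⟩` is a scale of length `ν` in `∏_{i < ρord} lam i`:
a `<*`-increasing and `<*`-cofinal sequence in the product. -/
def IsScale (ρord : Ordinal.{u}) (lam : Ordinal.{u} → Cardinal.{u}) (ν : Cardinal.{u})
    (g : Ordinal.{u} → Ordinal.{u} → Ordinal.{u}) : Prop :=
  (∀ η, η < ν.ord → InProd ρord lam (g η)) ∧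
  (∀ η₁ η₂, η₁ < η₂ → η₂ < ν.ord → EvDomLt ρord (g η₁) (g η₂)) ∧
  ∀ f, InProd ρord lam f → ∃ η, η < ν.ord ∧ EvDomLt ρord f (g η)

/-- `supBelow μ i = sup_{i' < i} μ i'`. -/
noncomputable def supBelow (μ : Ordinal.{u} → Cardinal.{u}) (i : Ordinal.{u}) : Cardinal.{u} :=
  sSup {c | ∃ i', i' < i ∧ c = μ i'}


theorem myCardLe {o : Ordinal.{u}} {s : Set Ordinal.{u}} (h : s ⊆ Set.Iio o) :
    #s ≤ Cardinal.lift.{u+1} o.card :=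
  (Cardinal.mk_le_mk_of_subset h).trans (le_of_eq (Ordinal.mk_Iio_ordinal o))

theorem exists_ge_of_card {c : Cardinal.{u}} {s : Set Ordinal.{u}}
    (hcard : Cardinal.lift.{u+1} c ≤ #s) {b : Ordinal.{u}} (hb : b < c.ord) :
    ∃ x ∈ s, b ≤ x := by
  by_contra hcon
  push_neg at hcon
  have h1 : #s ≤ Cardinal.lift.{u+1} b.card := myCardLe (fun x hx => hcon x hx)
  exact absurd (hcard.trans h1) (not_le.mpr (Cardinal.lift_lt.mpr (Cardinal.lt_ord.mp hb)))

theorem almostSub_trans {κ : Cardinal.{u}} {A B C : Set Ordinal.{u}}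
    (h1 : AlmostSub κ A B) (h2 : AlmostSub κ B C) : AlmostSub κ A C := by
  obtain ⟨b1, hb1, hs1⟩ := h1
  obtain ⟨b2, hb2, hs2⟩ := h2
  refine ⟨max b1 b2, max_lt hb1 hb2, fun x hx => ?_⟩
  by_cases hxB : x ∈ B
  · exact Set.mem_Iio.mpr (lt_of_lt_of_le (Set.mem_Iio.mp (hs2 ⟨hxB, hx.2⟩)) (le_max_right _ _))
  · exact Set.mem_Iio.mpr (lt_of_lt_of_le (Set.mem_Iio.mp (hs1 ⟨hx.1, hxB⟩)) (le_max_left _ _))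

theorem no_single_generator {m : Cardinal.{u}} (hm : ℵ₀ ≤ m) (U : UltrafilterOn m)
    (hU : U.IsUniform) {S : Set Ordinal.{u}} (hS : S ∈ U.sets) :
    ¬ ∀ X ∈ U.sets, AlmostSub m S X := by
  intro hall
  have hcardS : #S = Cardinal.lift.{u+1} m := hU S hS
  have hSsub : S ⊆ Set.Iio m.ord := U.sets_subset S hS
  have hinf : ℵ₀ ≤ #↥S := by
    rw [hcardS]; simpa using Cardinal.lift_le.{u+1}.mpr hm
  have hsum : #(↥S ⊕ ↥S) = #↥S := by
    simp [Cardinal.add_eq_self hinf]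
  obtain ⟨e⟩ := Cardinal.eq.mp hsum
  set X : Set Ordinal.{u} := Subtype.val '' (⇑e '' Set.range Sum.inl) with hXdef
  have hXS : X ⊆ S := by rintro x ⟨y, _, rfl⟩; exact y.2
  have hXcard : Cardinal.lift.{u+1} m ≤ #X := by
    rw [hXdef, Cardinal.mk_image_eq Subtype.val_injective, Cardinal.mk_image_eq e.injective,
      Cardinal.mk_range_eq _ Sum.inl_injective, hcardS]
  have hXc : Subtype.val '' (⇑e '' Set.range Sum.inr) ⊆ S \ X := by
    rintro x ⟨y, hy, rfl⟩
    refine ⟨y.2, fun hxX => ?_⟩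
    obtain ⟨y', hy', hval⟩ := hxX
    have hyy : y' = y := Subtype.val_injective hval
    subst hyy
    obtain ⟨a, ⟨a0, rfl⟩, ha⟩ := hy'
    obtain ⟨b, ⟨b0, rfl⟩, hb⟩ := hy
    rw [← hb] at ha
    exact Sum.inl_ne_inr (e.injective ha)
  have hXccard : Cardinal.lift.{u+1} m ≤ #(S \ X : Set Ordinal.{u}) := by
    refine le_trans (le_of_eq ?_) (Cardinal.mk_le_mk_of_subset hXc)
    rw [Cardinal.mk_image_eq Subtype.val_injective, Cardinal.mk_image_eq e.injective,
      Cardinal.mk_range_eq _ Sum.inr_injective, hcardS]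
  rcases U.mem_or_compl_mem X (hXS.trans hSsub) with hmem | hmem
  · obtain ⟨b, hb, hbs⟩ := hall X hmem
    obtain ⟨x, hx, hbx⟩ := exists_ge_of_card hXccard hb
    exact absurd (hbs hx) (not_lt.mpr hbx)
  · obtain ⟨b, hb, hbs⟩ := hall _ hmem
    have hXsub' : X ⊆ S \ (Set.Iio m.ord \ X) := fun x hx => ⟨hXS hx, fun hc => hc.2 hx⟩
    obtain ⟨x, hx, hbx⟩ := exists_ge_of_card (hXcard.trans (Cardinal.mk_le_mk_of_subset hXsub')) hb
    exact absurd (hbs hx) (not_lt.mpr hbx)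
/-- if the sets `Y X α β` generate the ultrafilter `W` on `κ`, then the
character of `W` is exactly `τ`: the family is a base of cardinality `τ` and no base has
cardinality less than `τ`. -/
theorem statement3
    (κ ρ σ τ : Cardinal.{u})
    (hκinf : ℵ₀ ≤ κ) (hκsing : κ.ord.cof < κ) (hκcof : κ.ord.cof = ρ)
    (h2ρ : 2 ^ ρ ≤ κ)
    (μ θ : Ordinal.{u} → Cardinal.{u})
    (hρμ0 : ρ < μ 0)
    (hμmono : ∀ i j, i < j → j < ρ.ord → μ i < μ j)
    (hμlt : ∀ i, i < ρ.ord → μ i < κ)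
    (hμcofinal : ∀ c, c < κ → ∃ i, i < ρ.ord ∧ c ≤ μ i)
    (hθreg : ∀ i, i < ρ.ord → (θ i).IsRegular)
    (Ui : (i : Ordinal.{u}) → UltrafilterOn (μ i))
    (A : Ordinal.{u} → Ordinal.{u} → Set Ordinal.{u})
    (hUi : ∀ i, i < ρ.ord → (Ui i).IsUniform ∧ (Ui i).IsComplete ∧
      (Ui i).IsADGenSeq (θ i).ord (A i))
    (hAsub : ∀ i, i < ρ.ord → ∀ η, η < (θ i).ord →
      A i η ⊆ Set.Ico (supBelow μ i).ord (μ i).ord)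
    (f g : Ordinal.{u} → Ordinal.{u} → Ordinal.{u})
    (hσreg : σ.IsRegular) (hκσ : κ < σ)
    (hf : IsScale ρ.ord μ σ f)
    (hτreg : τ.IsRegular) (hστ : σ ≤ τ)
    (hg : IsScale ρ.ord θ τ g)
    (E : UltrafilterOn ρ) (hE : E.IsUniform)
    (Y : Set Ordinal.{u} → Ordinal.{u} → Ordinal.{u} → Set Ordinal.{u})
    (hY : ∀ X α β, Y X α β = ⋃ i ∈ X, (A i (g β i) \ Set.Iio (f α i)))
    (W : UltrafilterOn κ)
    (hW : W.sets = {Z | Z ⊆ Set.Iio κ.ord ∧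
      ∃ X ∈ E.sets, ∃ α, α < σ.ord ∧ ∃ β, β < τ.ord ∧ Y X α β ⊆ Z}) :
    W.IsBase {S : Set Ordinal.{u} | ∃ X ∈ E.sets, ∃ α, α < σ.ord ∧ ∃ β, β < τ.ord ∧
        S = Y X α β} ∧
    #({S : Set Ordinal.{u} | ∃ X ∈ E.sets, ∃ α, α < σ.ord ∧ ∃ β, β < τ.ord ∧ S = Y X α β})
        = Cardinal.lift.{u + 1, u} τ ∧
    (∀ B, W.IsBase B → Cardinal.lift.{u + 1, u} τ ≤ #B) ∧
    W.char = Cardinal.lift.{u + 1, u} τ := by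
  -- basic cardinal facts
  have hρinf : ℵ₀ ≤ ρ := hκcof ▸ (Ordinal.aleph0_le_cof.mpr (Cardinal.isSuccLimit_ord hκinf))
  have hσinf : ℵ₀ ≤ σ := hσreg.aleph0_le
  have hτinf : ℵ₀ ≤ τ := hτreg.aleph0_le
  have hκτ : κ ≤ τ := hκσ.le.trans hστ
  have hρord : Order.IsSuccLimit ρ.ord := Cardinal.isSuccLimit_ord hρinf
  have hτord : Order.IsSuccLimit τ.ord := Cardinal.isSuccLimit_ord hτinf
  have hσord : Order.IsSuccLimit σ.ord := Cardinal.isSuccLimit_ord hσinf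
  have hκord : Order.IsSuccLimit κ.ord := Cardinal.isSuccLimit_ord hκinf
  have hμ0le : ∀ i, i < ρ.ord → μ 0 ≤ μ i := by
    intro i hi
    rcases eq_or_lt_of_le (zero_le (a := i)) with h | h
    · exact le_of_eq (by rw [← h])
    · exact (hμmono 0 i h hi).le
  have hμinf : ∀ i, i < ρ.ord → ℵ₀ ≤ μ i :=
    fun i hi => ((hρinf.trans hρμ0.le).trans (hμ0le i hi))
  have hμj_le_sup : ∀ j i, j < i → i < ρ.ord → (μ j).ord ≤ (supBelow μ i).ord := by
    intro j i hj hi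
    apply Cardinal.ord_le_ord.mpr
    refine le_csSup ⟨κ, ?_⟩ ⟨j, hj, rfl⟩
    rintro c ⟨i', hi', rfl⟩
    exact (hμlt i' (hi'.trans hi)).le
  have hYsub : ∀ X, X ⊆ Set.Iio ρ.ord → ∀ α β, β < τ.ord → Y X α β ⊆ Set.Iio κ.ord := by
    intro X hX α β hβ x hx
    rw [hY] at hx
    obtain ⟨i, hiX, hxA⟩ := Set.mem_iUnion₂.mp hx
    have hiρ : i < ρ.ord := hX hiX
    have h1 := (hAsub i hiρ _ (hg.1 β hβ i hiρ)) hxA.1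
    exact Set.mem_Iio.mpr (lt_of_lt_of_le h1.2 (Cardinal.ord_le_ord.mpr (hμlt i hiρ).le))
  have hYmem : ∀ X ∈ E.sets, ∀ α, α < σ.ord → ∀ β, β < τ.ord → Y X α β ∈ W.sets := by
    intro X hX α hα β hβ
    rw [hW]
    exact ⟨hYsub X (E.sets_subset X hX) α β hβ, X, hX, α, hα, β, hβ, subset_rfl⟩
  have hXunb : ∀ X ∈ E.sets, ∀ b, b < ρ.ord → ∃ i ∈ X, b ≤ i := by
    intro X hX b hb
    exact exists_ge_of_card (le_of_eq (hE X hX).symm) hb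
  -- Conjunct 1 : the family is a base
  have hbase : W.IsBase {S : Set Ordinal.{u} | ∃ X ∈ E.sets, ∃ α, α < σ.ord ∧ ∃ β, β < τ.ord ∧
      S = Y X α β} := by
    constructor
    · rintro S ⟨X, hX, α, hα, β, hβ, rfl⟩
      exact hYmem X hX α hα β hβ
    · intro Z hZ
      rw [hW] at hZ
      obtain ⟨hZsub, X, hX, α, hα, β, hβ, hYZ⟩ := hZ
      refine ⟨Y X α β, ⟨X, hX, α, hα, β, hβ, rfl⟩, 1, Ordinal.one_lt_of_isSuccLimit hκord, ?_⟩
      intro x hx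
      exact absurd (hYZ hx.1) hx.2
  -- jump machinery
  have hjump : ∀ i, i < ρ.ord → ∀ η, η < (θ i).ord →
      ∃ η', η ≤ η' ∧ η' < (θ i).ord ∧ ¬ AlmostSub (μ i) (A i η) (A i η') := by
    intro i hi η hη
    by_contra hcon
    push_neg at hcon
    obtain ⟨huni, hcomp, hADmem, hADdec, hADbase⟩ := hUi i hi
    apply no_single_generator (hμinf i hi) (Ui i) huni (hADmem η hη)
    intro X hX
    obtain ⟨YY, hYY, hYX⟩ := hADbase.2 X hX
    obtain ⟨η'', hη'', rfl⟩ := hYY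
    rcases le_total η η'' with hle | hle
    · exact almostSub_trans (hcon η'' hle hη'') hYX
    · exact almostSub_trans (hADdec η'' η hle hη) hYX
  choose h hh1 hh2 hh3 using hjump
  have hjumpext : ∀ i (hi : i < ρ.ord) η (hη : η < (θ i).ord), ∀ η₂, h i hi η hη ≤ η₂ →
      η₂ < (θ i).ord → ¬ AlmostSub (μ i) (A i η) (A i η₂) := by
    intro i hi η hη η₂ hle hη₂ hcon
    obtain ⟨-, -, -, hADdec, -⟩ := hUi i hi
    exact hh3 i hi η hη (almostSub_trans hcon (hADdec _ _ hle hη₂))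
  -- Conjunct 3 : no small base
  have hlower : ∀ B, W.IsBase B → Cardinal.lift.{u+1,u} τ ≤ #B := by
    intro B hB
    by_contra hcon
    push_neg at hcon
    have hdata : ∀ Z : ↥B, ∃ X, X ∈ E.sets ∧ ∃ α, α < σ.ord ∧ ∃ β, β < τ.ord ∧
        Y X α β ⊆ (Z : Set Ordinal.{u}) := by
      intro Z
      have hZW := hB.1 Z.2
      rw [hW] at hZW
      obtain ⟨-, X, hX, α, hα, β, hβ, hss⟩ := hZW
      exact ⟨X, hX, α, hα, β, hβ, hss⟩
    choose Xf hXf αf hαf βf hβf hYf using hdata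
    have hjz : ∀ Z : ↥B, ∃ β', β' < τ.ord ∧ EvDomLt ρ.ord
        (fun i => if hi : i < ρ.ord then
          (if hη : g (βf Z) i < (θ i).ord then h i hi (g (βf Z) i) hη else 0) else 0)
        (g β') := by
      intro Z
      apply hg.2.2
      intro i hi
      simp only [dif_pos hi, dif_pos (hg.1 _ (hβf Z) i hi)]
      exact hh2 i hi _ _
    choose β' hβ'lt hβ'ev using hjz
    -- bound the β' in τ.ord
    set s' : Set τ.ord.ToType :=
      Set.range (fun Z : ↥B => Ordinal.ToType.mk ⟨β' Z, hβ'lt Z⟩) with hs'def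
    have hs'card : #↥s' < τ := by
      have hemb : Function.Injective
          (fun x : ↥s' => (Classical.choose x.2 : ↥B)) := by
        intro x y hxy
        have hx := Classical.choose_spec x.2
        have hy := Classical.choose_spec y.2
        dsimp only at hxy hx hy
        apply Subtype.ext
        rw [← hx, ← hy, hxy]
      have h1 := Cardinal.lift_mk_le'.{u, u+1}.mpr ⟨⟨_, hemb⟩⟩
      rw [Cardinal.lift_id'.{u, u+1}] at h1
      exact Cardinal.lift_lt.{u, u+1}.mp (lt_of_le_of_lt h1 hcon)
    set F : ↥s' → Ordinal.{u} :=
      (fun x => ((Ordinal.ToType.mk (o := τ.ord)).symm x.1 : Ordinal.{u})) with hFdef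
    have hFlt : ∀ x, F x < τ.ord := fun x => ((Ordinal.ToType.mk (o := τ.ord)).symm x.1).2
    have hsup : iSup F < τ.ord := by
      apply Ordinal.iSup_lt_ord _ hFlt
      rwa [hτreg.cof_eq]
    have hβZ_le : ∀ Z : ↥B, β' Z ≤ iSup F := by
      intro Z
      have hx : Ordinal.ToType.mk ⟨β' Z, hβ'lt Z⟩ ∈ s' := ⟨Z, rfl⟩
      have hFx : F ⟨_, hx⟩ = β' Z := by
        simp [hFdef]
      rw [← hFx]
      exact le_ciSup (Ordinal.bddAbove_range F) _
    set βp : Ordinal.{u} := iSup F + 1 with hβpdef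
    have hβp : βp < τ.ord := hτord.add_one_lt hsup
    -- the test set T
    have hTmem : Y (Set.Iio ρ.ord) 0 βp ∈ W.sets := hYmem _ E.univ_mem 0 hσord.pos βp hβp
    obtain ⟨Z₀, hZ₀B, hZ₀T⟩ := hB.2 _ hTmem
    set Z : ↥B := ⟨Z₀, hZ₀B⟩ with hZdef
    obtain ⟨b, hbκ, hbsub⟩ := hZ₀T
    obtain ⟨i₁, hi₁ρ, hi₁⟩ := hβ'ev Z
    have hβ'βp : β' Z < βp := lt_of_le_of_lt (hβZ_le Z) (by
      rw [hβpdef, Ordinal.add_one_eq_succ]; exact Order.lt_succ _)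
    obtain ⟨i₂, hi₂ρ, hi₂⟩ := hg.2.1 (β' Z) βp hβ'βp hβp
    have hbcard : b.card < κ := Cardinal.lt_ord.mp hbκ
    obtain ⟨i₃, hi₃ρ, hi₃⟩ := hμcofinal b.card hbcard
    have hi₃'' : i₃ + 1 + 1 < ρ.ord := hρord.add_one_lt (hρord.add_one_lt hi₃ρ)
    obtain ⟨i, hiX, hige⟩ := hXunb (Xf Z) (hXf Z) (max (max i₁ i₂) (i₃ + 1 + 1))
      (max_lt (max_lt hi₁ρ hi₂ρ) hi₃'')
    have hiρ : i < ρ.ord := E.sets_subset _ (hXf Z) hiX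
    have hi₁le : i₁ ≤ i := ((le_max_left _ _).trans (le_max_left _ _)).trans hige
    have hi₂le : i₂ ≤ i := ((le_max_right _ _).trans (le_max_left _ _)).trans hige
    have hi₃lt : i₃ + 1 < i := by
      have h1 : i₃ + 1 < i₃ + 1 + 1 := by
        rw [Ordinal.add_one_eq_succ (i₃+1)]; exact Order.lt_succ _
      exact lt_of_lt_of_le (h1.trans_le (le_max_right _ _)) hige
    -- the slice at i
    have hηθ : g (βf Z) i < (θ i).ord := hg.1 _ (hβf Z) i hiρ
    have hη2θ : g βp i < (θ i).ord := hg.1 _ hβp i hiρ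
    have hjlt : h i hiρ (g (βf Z) i) hηθ < g βp i := by
      have h1 := hi₁ i hi₁le hiρ
      simp only [dif_pos hiρ, dif_pos hηθ] at h1
      exact h1.trans (hi₂ i hi₂le hiρ)
    have hnas : ¬ AlmostSub (μ i) (A i (g (βf Z) i)) (A i (g βp i)) :=
      hjumpext i hiρ _ hηθ _ hjlt.le hη2θ
    have hfα : f (αf Z) i < (μ i).ord := hf.1 _ (hαf Z) i hiρ
    have hns : ¬ (A i (g (βf Z) i) \ A i (g βp i) ⊆ Set.Iio (f (αf Z) i)) :=
      fun hc => hnas ⟨_, hfα, hc⟩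
    obtain ⟨x, hxmem, hxge⟩ := Set.not_subset.mp hns
    have hxIco := hAsub i hiρ _ hηθ hxmem.1
    have hxY : x ∈ Y (Xf Z) (αf Z) (βf Z) := by
      rw [hY]
      exact Set.mem_biUnion hiX ⟨hxmem.1, hxge⟩
    have hxZ : x ∈ Z₀ := hYf Z hxY
    have hxT : x ∉ Y (Set.Iio ρ.ord) 0 βp := by
      rw [hY]
      intro hx
      obtain ⟨j, hjρ, hxj⟩ := Set.mem_iUnion₂.mp hx
      have hjρ' : j < ρ.ord := hjρ
      rcases lt_trichotomy j i with hji | rfl | hij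
      · have h1 := (hAsub j hjρ' _ (hg.1 _ hβp j hjρ')) hxj.1
        exact absurd (lt_of_lt_of_le h1.2 (hμj_le_sup j i hji hiρ)) (not_lt.mpr hxIco.1)
      · exact hxmem.2 hxj.1
      · have h1 := (hAsub j hjρ' _ (hg.1 _ hβp j hjρ')) hxj.1
        exact absurd (lt_of_lt_of_le hxIco.2 (hμj_le_sup i j hij hjρ')) (not_lt.mpr h1.1)
    have hxb : x < b := hbsub ⟨hxZ, hxT⟩
    have hi₃ρ' : i₃ + 1 < ρ.ord := hi₃lt.trans hiρ
    have hb' : b < (μ (i₃+1)).ord := by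
      apply Cardinal.lt_ord.mpr
      exact lt_of_le_of_lt hi₃ (hμmono i₃ (i₃+1) (by
        rw [Ordinal.add_one_eq_succ]; exact Order.lt_succ _) hi₃ρ')
    have hxge' : (μ (i₃+1)).ord ≤ x := le_trans (hμj_le_sup (i₃+1) i hi₃lt hiρ) hxIco.1
    exact absurd hxb (not_lt.mpr (hb'.le.trans hxge'))
  -- Conjunct 2 : the base has cardinality τ
  have hEcard : #↥E.sets ≤ Cardinal.lift.{u+1} τ := by
    calc #↥E.sets ≤ #↥(𝒫 (Set.Iio ρ.ord)) :=
          Cardinal.mk_le_mk_of_subset (fun X hX => E.sets_subset X hX)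
      _ = 2 ^ #↥(Set.Iio ρ.ord) := Cardinal.mk_powerset _
      _ = 2 ^ Cardinal.lift.{u+1} ρ := by rw [Ordinal.mk_Iio_ordinal, Cardinal.card_ord]
      _ = Cardinal.lift.{u+1} (2 ^ ρ) := by rw [Cardinal.lift_power, Cardinal.lift_two]
      _ ≤ Cardinal.lift.{u+1} τ := Cardinal.lift_le.mpr (h2ρ.trans hκτ)
  have hIioσ : #↥(Set.Iio σ.ord) = Cardinal.lift.{u+1} σ := by
    rw [Ordinal.mk_Iio_ordinal, Cardinal.card_ord]
  have hIioτ : #↥(Set.Iio τ.ord) = Cardinal.lift.{u+1} τ := by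
    rw [Ordinal.mk_Iio_ordinal, Cardinal.card_ord]
  have hτliftinf : ℵ₀ ≤ Cardinal.lift.{u+1} τ := by
    simpa using Cardinal.lift_le.{u+1}.mpr hτinf
  have hcard2 : #({S : Set Ordinal.{u} | ∃ X ∈ E.sets, ∃ α, α < σ.ord ∧ ∃ β, β < τ.ord ∧
      S = Y X α β}) = Cardinal.lift.{u+1, u} τ := by
    apply le_antisymm
    · have hsub : {S : Set Ordinal.{u} | ∃ X ∈ E.sets, ∃ α, α < σ.ord ∧ ∃ β, β < τ.ord ∧
          S = Y X α β} ⊆ Set.range (fun p : ↥E.sets × ↥(Set.Iio σ.ord) × ↥(Set.Iio τ.ord) =>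
          Y p.1 p.2.1 p.2.2) := by
        rintro S ⟨X, hX, α, hα, β, hβ, rfl⟩
        exact ⟨⟨⟨X, hX⟩, ⟨α, hα⟩, ⟨β, hβ⟩⟩, rfl⟩
      calc #({S : Set Ordinal.{u} | ∃ X ∈ E.sets, ∃ α, α < σ.ord ∧ ∃ β, β < τ.ord ∧
              S = Y X α β})
          ≤ #↥(Set.range (fun p : ↥E.sets × ↥(Set.Iio σ.ord) × ↥(Set.Iio τ.ord) =>
              Y p.1 p.2.1 p.2.2)) := Cardinal.mk_le_mk_of_subset hsub
        _ ≤ #(↥E.sets × ↥(Set.Iio σ.ord) × ↥(Set.Iio τ.ord)) := Cardinal.mk_range_le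
        _ = #↥E.sets * (#↥(Set.Iio σ.ord) * #↥(Set.Iio τ.ord)) := by
            simp [Cardinal.mk_prod]
        _ ≤ Cardinal.lift.{u+1} τ * (Cardinal.lift.{u+1} τ * Cardinal.lift.{u+1} τ) := by
            gcongr
            · rw [hIioσ]; exact Cardinal.lift_le.mpr (hστ)
            · exact le_of_eq hIioτ
        _ = Cardinal.lift.{u+1} τ := by
            rw [Cardinal.mul_eq_self hτliftinf, Cardinal.mul_eq_self hτliftinf]
    · exact hlower _ hbase
  refine ⟨hbase, hcard2, hlower, ?_⟩
  -- the character
  unfold UltrafilterOn.char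
  apply le_antisymm
  · exact csInf_le (OrderBot.bddBelow _) ⟨_, hbase, hcard2⟩
  · refine le_csInf ⟨Cardinal.lift.{u+1} τ, ⟨_, hbase, hcard2⟩⟩ ?_
    rintro c ⟨Bb, hBb, rfl⟩
    exact hlower Bb hBb
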